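/- Fix n ≥ 1, ν > 0 and σ ∈ (0,1/2). There exist constants C > 0 and c > 0 such that for every ℓ ∈ {0,1}, every t ≥ 0, and every ξ ∈ ℝⁿ with 0 < |ξ| ≤ ρ: |∂ₜ^ℓ 𝒥₁(t,ξ)| ≤ C e^{−c(1+t)|ξ|^{2(1−σ)}} |ξ|^{2(1−σ)ℓ} and |∂ₜ^ℓ 𝒥₂(t,ξ)| ≤ C e^{−c(1+t)|ξ|^{2(1−σ)}} |ξ|^{2(1−σ)ℓ − 2σ}, where ∂ₜ⁰ denotes the function itself and ∂ₜ¹ its time derivative. -/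

import Mathlib

set_option maxHeartbeats 1000000

noncomputable def myκ (ν σ : ℝ) : ℝ :=
  Real.sqrt (1 - (1/2 : ℝ) ^ ((2:ℝ) - 4*σ)) * (ν/2)

noncomputable def myC (ν σ ρ : ℝ) : ℝ :=
  ((ν/2 + 3/2 + 1/ν) / myκ ν σ) * Real.exp ((1/ν) * ρ ^ (2*(1 - σ)))

lemma myκ_pos (ν σ : ℝ) (hν : 0 < ν) (hσh : σ < 1/2) : 0 < myκ ν σ := by
  have hθ1 : (1/2 : ℝ) ^ ((2:ℝ) - 4*σ) < 1 :=
    Real.rpow_lt_one (by norm_num) (by norm_num) (by linarith)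
  exact mul_pos (Real.sqrt_pos.2 (by linarith)) (by linarith)

lemma aux_est (ν σ ρ : ℝ) (hν : 0 < ν) (hσ0 : 0 < σ) (hσh : σ < 1/2)
    (hρ : ρ = (1/2) * (ν/2) ^ ((1:ℝ)/(1 - 2*σ)))
    (r : ℝ) (hr0 : 0 < r) (hrρ : r ≤ ρ)
    (p q : ℝ)
    (hp : p = -(ν/2) * r ^ (2*σ) + Real.sqrt (ν^2/4 * r ^ (4*σ) - r^2))
    (hq : q = -(ν/2) * r ^ (2*σ) - Real.sqrt (ν^2/4 * r ^ (4*σ) - r^2))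
    (t : ℝ) (ht : 0 ≤ t) :
    |(-q) * Real.exp (p * t) / (p - q)|
        ≤ myC ν σ ρ * Real.exp (-(1/ν) * (1 + t) * r ^ (2*(1 - σ))) ∧
    |Real.exp (p * t) / (p - q)|
        ≤ myC ν σ ρ * Real.exp (-(1/ν) * (1 + t) * r ^ (2*(1 - σ))) * r ^ (-(2*σ)) ∧
    |(-q) * p * Real.exp (p * t) / (p - q)|
        ≤ myC ν σ ρ * Real.exp (-(1/ν) * (1 + t) * r ^ (2*(1 - σ))) * r ^ (2*(1 - σ)) ∧
    |p * Real.exp (p * t) / (p - q)|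
        ≤ myC ν σ ρ * Real.exp (-(1/ν) * (1 + t) * r ^ (2*(1 - σ))) * r ^ (2*(1 - σ) - 2*σ) := by
  have h12 : (0:ℝ) < 1 - 2*σ := by linarith
  set θ : ℝ := (1/2 : ℝ) ^ ((2:ℝ) - 4*σ) with hθdef
  have hθ0 : 0 < θ := Real.rpow_pos_of_pos (by norm_num) _
  have hθ1 : θ < 1 := Real.rpow_lt_one (by norm_num) (by norm_num) (by linarith)
  set κ : ℝ := myκ ν σ with hκdef
  have hκ0 : 0 < κ := myκ_pos ν σ hν hσh
  have hκ_eq : κ = Real.sqrt (1 - θ) * (ν/2) := rfl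
  have hρ0 : 0 < ρ := by
    rw [hρ]
    have : 0 < (ν/2:ℝ) ^ ((1:ℝ)/(1 - 2*σ)) := Real.rpow_pos_of_pos (by linarith) _
    linarith
  -- basic quantities
  set s2 : ℝ := r ^ (2*σ) with hs2def
  have hs2 : 0 < s2 := Real.rpow_pos_of_pos hr0 _
  set rα : ℝ := r ^ (2*(1 - σ)) with hrαdef
  have hrα : 0 < rα := Real.rpow_pos_of_pos hr0 _
  have hsplit : r^2 = s2 * rα := by
    rw [hs2def, hrαdef, ← Real.rpow_add hr0]
    rw [show (2*σ + 2*(1 - σ)) = ((2:ℕ):ℝ) by push_cast; ring, Real.rpow_natCast]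
  have hs4 : r ^ (4*σ) = s2^2 := by
    rw [hs2def, ← Real.rpow_natCast (r ^ (2*σ)) 2, ← Real.rpow_mul hr0.le]
    congr 1; push_cast; ring
  set a : ℝ := ν/2 * s2 with hadef
  have ha : 0 < a := by positivity
  -- bound on r^(2-4σ)
  have hρexp : ρ ^ ((2:ℝ) - 4*σ) = θ * (ν^2/4) := by
    rw [hρ, Real.mul_rpow (by norm_num) (Real.rpow_nonneg (by linarith) _),
        ← Real.rpow_mul (by linarith : (0:ℝ) ≤ ν/2)]
    rw [show ((1:ℝ)/(1 - 2*σ)) * ((2:ℝ) - 4*σ) = ((2:ℕ):ℝ) by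
      push_cast; field_simp; ring, Real.rpow_natCast]
    rw [hθdef]; ring
  have hrexp : r ^ ((2:ℝ) - 4*σ) ≤ θ * (ν^2/4) := by
    rw [← hρexp]
    exact Real.rpow_le_rpow hr0.le hrρ (by linarith)
  have hr2s : r^2 = s2^2 * r ^ ((2:ℝ) - 4*σ) := by
    rw [← hs4, ← Real.rpow_add hr0]
    rw [show (4*σ + ((2:ℝ) - 4*σ)) = ((2:ℕ):ℝ) by push_cast; ring, Real.rpow_natCast]
  -- D and E
  have hD_lb : (κ * s2)^2 ≤ ν^2/4 * r ^ (4*σ) - r^2 := by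
    have h1 : r^2 ≤ s2^2 * (θ * (ν^2/4)) := by
      rw [hr2s]
      exact mul_le_mul_of_nonneg_left hrexp (by positivity)
    have h2 : (κ * s2)^2 = (1 - θ) * (ν^2/4) * s2^2 := by
      rw [hκ_eq, mul_pow, mul_pow, Real.sq_sqrt (by linarith)]
      ring
    rw [hs4, h2]; nlinarith
  have hD0 : 0 ≤ ν^2/4 * r ^ (4*σ) - r^2 := le_trans (by positivity) hD_lb
  set E : ℝ := Real.sqrt (ν^2/4 * r ^ (4*σ) - r^2) with hEdef
  have hE2 : E^2 = ν^2/4 * r ^ (4*σ) - r^2 := Real.sq_sqrt hD0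
  have hE_lb : κ * s2 ≤ E := by
    rw [hEdef]
    exact (Real.le_sqrt (by positivity) hD0).2 hD_lb
  have hE0 : 0 < E := lt_of_lt_of_le (by positivity) hE_lb
  have hE_ub : E ≤ a := by
    have h1 : ν^2/4 * r ^ (4*σ) - r^2 ≤ a^2 := by
      rw [hadef, hs4]
      have h2 : (ν/2*s2)^2 = ν^2/4*s2^2 := by ring
      linarith [sq_nonneg r]
    calc E ≤ Real.sqrt (a^2) := Real.sqrt_le_sqrt h1
    _ = a := Real.sqrt_sq ha.le
  -- roots
  have hp' : p = -a + E := by rw [hp, hadef]; ring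
  have hq' : q = -a - E := by rw [hq, hadef]; ring
  have hpq : p - q = 2*E := by rw [hp', hq']; ring
  have hqn : -q = a + E := by rw [hq']; ring
  have hprod : (-p) * (a + E) = r^2 := by rw [hp']; nlinarith [hE2]
  have hpneg : -p = r^2 / (a + E) := by
    field_simp at hprod ⊢; linarith [hprod]
  have hp_ub : -p ≤ 2*rα/ν := by
    rw [hpneg]
    have h1 : r^2 / (a + E) ≤ r^2 / a := by
      apply div_le_div_of_nonneg_left (by positivity) ha (by linarith)
    calc r^2 / (a+E) ≤ r^2 / a := h1
    _ = 2*rα/ν := by rw [hsplit, hadef]; field_simp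
  have hp_lb : rα/ν ≤ -p := by
    rw [hpneg]
    have h1 : r^2 / (2*a) ≤ r^2 / (a + E) := by
      apply div_le_div_of_nonneg_left (by positivity) (by linarith) (by linarith)
    calc rα/ν = r^2/(2*a) := by rw [hsplit, hadef]; field_simp
    _ ≤ r^2/(a+E) := h1
  have hp0 : 0 < -p := lt_of_lt_of_le (by positivity) hp_lb
  have hp_ub' : ν * (-p) ≤ 2*rα := by
    have h := (le_div_iff₀ hν).1 hp_ub
    linarith
  have haE : a + E ≤ ν * s2 := by
    have h2a : 2*a = ν * s2 := by rw [hadef]; ring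
    linarith
  have hκE : κ ≤ E * s2⁻¹ := by
    have h := mul_le_mul_of_nonneg_right hE_lb (inv_nonneg.2 hs2.le)
    rwa [mul_assoc, mul_inv_cancel₀ hs2.ne', mul_one] at h
  have h2E : (0:ℝ) < 2*E := by linarith
  have hEs2 : (0:ℝ) ≤ E * s2⁻¹ := mul_nonneg hE0.le (inv_nonneg.2 hs2.le)
  set S : ℝ := ν/2 + 3/2 + 1/ν with hSdef
  have hmyC : myC ν σ ρ = S/κ * Real.exp ((1/ν) * ρ ^ (2*(1 - σ))) := by
    rw [hSdef, hκdef]; rfl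
  clear_value θ κ s2 rα a E S
  have h1ν : (0:ℝ) < 1/ν := by positivity
  have hS32 : (3:ℝ)/2 ≤ S := by rw [hSdef]; linarith
  have hS : 0 < S := lt_of_lt_of_le (by norm_num) hS32
  have hνS : ν ≤ 2*S := by rw [hSdef]; linarith
  have hνS1 : 1 ≤ ν * S := by
    have hinv : ν * (1/ν) = 1 := by field_simp
    have hexp : ν*S = ν^2/2 + 3*ν/2 + ν*(1/ν) := by rw [hSdef]; ring
    rw [hexp, hinv]
    have := sq_nonneg ν
    linarith
  -- exponential estimates
  have hexp_t : Real.exp (p * t) ≤ Real.exp (-(1/ν) * t * rα) := by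
    apply Real.exp_le_exp.2
    have h1 : (rα/ν) * t ≤ (-p) * t := mul_le_mul_of_nonneg_right hp_lb ht
    have h2 : p * t = -(-p * t) := by ring
    have h3 : -(1/ν) * t * rα = -(rα/ν * t) := by ring
    rw [h2, h3]
    exact neg_le_neg h1
  have hrαρ : rα ≤ ρ ^ (2*(1 - σ)) := by
    rw [hrαdef]
    exact Real.rpow_le_rpow hr0.le hrρ (by linarith)
  have hsplitexp : Real.exp (-(1/ν) * (1 + t) * rα)
      = Real.exp (-(1/ν) * rα) * Real.exp (-(1/ν) * t * rα) := by
    rw [← Real.exp_add]; congr 1; ring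
  have hmyC0 : 0 < myC ν σ ρ := by
    rw [hmyC]; exact mul_pos (div_pos hS hκ0) (Real.exp_pos _)
  have hCm : S/κ ≤ myC ν σ ρ * Real.exp (-(1/ν) * rα) := by
    have h1 : Real.exp (-(1/ν) * ρ ^ (2*(1 - σ))) ≤ Real.exp (-(1/ν) * rα) :=
      Real.exp_le_exp.2 (by
        have := mul_le_mul_of_nonneg_left hrαρ h1ν.le
        linarith)
    have h2 : myC ν σ ρ * Real.exp (-(1/ν) * ρ ^ (2*(1 - σ))) = S/κ := by
      rw [hmyC, mul_assoc, ← Real.exp_add,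
        show (1/ν) * ρ ^ (2*(1 - σ)) + -(1/ν) * ρ ^ (2*(1 - σ)) = 0 by ring,
        Real.exp_zero, mul_one]
    calc S/κ = myC ν σ ρ * Real.exp (-(1/ν) * ρ ^ (2*(1 - σ))) := h2.symm
    _ ≤ myC ν σ ρ * Real.exp (-(1/ν) * rα) := mul_le_mul_of_nonneg_left h1 hmyC0.le
  -- generic final step
  have hmain : ∀ B P : ℝ, 0 ≤ B → 0 ≤ P → B ≤ S/κ * P →
      B * Real.exp (p*t) ≤ myC ν σ ρ * Real.exp (-(1/ν) * (1 + t) * rα) * P := by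
    intro B P hB hP hBP
    have hSκP : (0:ℝ) ≤ S/κ * P := mul_nonneg (div_nonneg hS.le hκ0.le) hP
    calc B * Real.exp (p*t) ≤ (S/κ * P) * Real.exp (-(1/ν)*t*rα) :=
        mul_le_mul hBP hexp_t (Real.exp_pos _).le hSκP
    _ ≤ ((myC ν σ ρ * Real.exp (-(1/ν)*rα)) * P) * Real.exp (-(1/ν)*t*rα) :=
        mul_le_mul_of_nonneg_right (mul_le_mul_of_nonneg_right hCm hP) (Real.exp_pos _).le
    _ = myC ν σ ρ * Real.exp (-(1/ν) * (1 + t) * rα) * P := by rw [hsplitexp]; ring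
  refine ⟨?_, ?_, ?_, ?_⟩
  · -- J1, ℓ = 0
    have e1 : (-q) * Real.exp (p*t) / (p - q) = ((a+E)/(2*E)) * Real.exp (p*t) := by
      rw [hqn, hpq]; ring
    rw [e1, abs_of_nonneg (mul_nonneg (div_nonneg (by positivity) h2E.le) (Real.exp_pos _).le)]
    have key1 : (a+E) * κ ≤ S * (2*E) := by
      calc (a+E)*κ ≤ (ν*s2)*κ := mul_le_mul_of_nonneg_right haE hκ0.le
      _ = ν*(κ*s2) := by ring
      _ ≤ ν*E := mul_le_mul_of_nonneg_left hE_lb hν.le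
      _ ≤ (2*S)*E := mul_le_mul_of_nonneg_right hνS hE0.le
      _ = S*(2*E) := by ring
    have hB1 : (a+E)/(2*E) ≤ S/κ * 1 := by
      rw [mul_one, div_le_div_iff₀ h2E hκ0]
      linarith
    have h := hmain ((a+E)/(2*E)) 1
      (div_nonneg (by positivity) h2E.le) zero_le_one hB1
    simpa using h
  · -- J2, ℓ = 0
    have e2 : Real.exp (p*t) / (p - q) = (1/(2*E)) * Real.exp (p*t) := by
      rw [hpq]; ring
    have hP2 : r ^ (-(2*σ)) = s2⁻¹ := by
      rw [Real.rpow_neg hr0.le, ← hs2def]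
    rw [e2, abs_of_nonneg (mul_nonneg (by positivity) (Real.exp_pos _).le), hP2]
    have key2 : 1 * κ ≤ (S * s2⁻¹) * (2*E) := by
      calc 1*κ = κ := one_mul κ
      _ ≤ E*s2⁻¹ := hκE
      _ ≤ (2*S)*(E*s2⁻¹) := le_mul_of_one_le_left hEs2 (by linarith)
      _ = (S*s2⁻¹)*(2*E) := by ring
    have hB2 : 1/(2*E) ≤ S/κ * s2⁻¹ := by
      rw [div_mul_eq_mul_div, div_le_div_iff₀ h2E hκ0]
      linarith
    exact hmain (1/(2*E)) s2⁻¹ (by positivity) (inv_nonneg.2 hs2.le) hB2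
  · -- J1, ℓ = 1
    have e3 : (-q) * p * Real.exp (p*t) / (p - q)
        = -((((a+E)*(-p))/(2*E)) * Real.exp (p*t)) := by
      rw [hqn, hpq]; ring
    have haEp : (0:ℝ) ≤ (a+E)*(-p) := mul_nonneg (by positivity) hp0.le
    rw [e3, abs_neg, abs_of_nonneg (mul_nonneg (div_nonneg haEp h2E.le) (Real.exp_pos _).le)]
    have key3 : ((a+E)*(-p)) * κ ≤ (S * rα) * (2*E) := by
      calc ((a+E)*(-p))*κ = (a+E)*((-p)*κ) := by ring
      _ ≤ (ν*s2)*((-p)*κ) := mul_le_mul_of_nonneg_right haE (mul_nonneg hp0.le hκ0.le)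
      _ = (ν*(-p))*(κ*s2) := by ring
      _ ≤ (2*rα)*E := mul_le_mul hp_ub' hE_lb (mul_nonneg hκ0.le hs2.le)
          (mul_nonneg (by norm_num) hrα.le)
      _ ≤ S*((2*rα)*E) := le_mul_of_one_le_left
          (mul_nonneg (mul_nonneg (by norm_num) hrα.le) hE0.le) (by linarith)
      _ = (S*rα)*(2*E) := by ring
    have hB3 : ((a+E)*(-p))/(2*E) ≤ S/κ * rα := by
      rw [div_mul_eq_mul_div, div_le_div_iff₀ h2E hκ0]
      linarith
    exact hmain (((a+E)*(-p))/(2*E)) rα (div_nonneg haEp h2E.le) hrα.le hB3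
  · -- J2, ℓ = 1
    have e4 : p * Real.exp (p*t) / (p - q) = -(((-p)/(2*E)) * Real.exp (p*t)) := by
      rw [hpq]; ring
    have hP4 : r ^ (2*(1 - σ) - 2*σ) = rα * s2⁻¹ := by
      rw [Real.rpow_sub hr0, ← hrαdef, ← hs2def, div_eq_mul_inv]
    rw [e4, abs_neg, abs_of_nonneg (mul_nonneg (div_nonneg hp0.le h2E.le)
      (Real.exp_pos _).le), hP4]
    have key4 : (-p) * κ ≤ (S * (rα * s2⁻¹)) * (2*E) := by
      have h4 : ν*((-p)*κ) ≤ ν*((S*(rα*s2⁻¹))*(2*E)) := by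
        calc ν*((-p)*κ) = (ν*(-p))*κ := by ring
        _ ≤ (2*rα)*κ := mul_le_mul_of_nonneg_right hp_ub' hκ0.le
        _ ≤ (2*rα)*(E*s2⁻¹) := mul_le_mul_of_nonneg_left hκE
            (mul_nonneg (by norm_num) hrα.le)
        _ ≤ (ν*S)*((2*rα)*(E*s2⁻¹)) := le_mul_of_one_le_left
            (mul_nonneg (mul_nonneg (by norm_num) hrα.le) hEs2) hνS1
        _ = ν*((S*(rα*s2⁻¹))*(2*E)) := by ring
      exact le_of_mul_le_mul_left h4 hν
    have hB4 : (-p)/(2*E) ≤ S/κ * (rα * s2⁻¹) := by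
      rw [div_mul_eq_mul_div, div_le_div_iff₀ h2E hκ0]
      linarith
    exact hmain ((-p)/(2*E)) (rα * s2⁻¹) (div_nonneg hp0.le h2E.le)
      (mul_nonneg hrα.le (inv_nonneg.2 hs2.le)) hB4

private lemma deriv_aux (a b e t : ℝ) :
    deriv (fun s => a * Real.exp (b * s) / e) t = a * b * Real.exp (b * t) / e := by
  have h1 : (fun s => a * Real.exp (b * s) / e) = fun s => (a / e) * Real.exp (b * s) := by
    funext s; ring
  rw [h1]
  have hd : HasDerivAt (fun s : ℝ => (a / e) * Real.exp (b * s))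
      ((a / e) * (Real.exp (b * t) * (b * 1))) t :=
    (((hasDerivAt_id t).const_mul b).exp).const_mul (a / e)
  rw [hd.deriv]; ring

private lemma deriv_aux2 (b e t : ℝ) :
    deriv (fun s => Real.exp (b * s) / e) t = b * Real.exp (b * t) / e := by
  have h1 : (fun s => Real.exp (b * s) / e) = fun s => (1 / e) * Real.exp (b * s) := by
    funext s; ring
  rw [h1]
  have hd : HasDerivAt (fun s : ℝ => (1 / e) * Real.exp (b * s))
      ((1 / e) * (Real.exp (b * t) * (b * 1))) t :=
    (((hasDerivAt_id t).const_mul b).exp).const_mul (1 / e)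
  rw [hd.deriv]; ring



/-- Pointwise low-frequency estimates for the multipliers `𝒥₁` and `𝒥₂` arising from the
structurally damped wave equation with `σ ∈ (0,1/2)`, for `ℓ = 0, 1` time derivatives. -/
theorem stmt3 (n : ℕ) (hn : 1 ≤ n) (ν σ : ℝ) (hν : 0 < ν)
    (hσ : σ ∈ Set.Ioo (0:ℝ) (1/2)) (ρ : ℝ)
    (hρ : ρ = (1/2) * (ν/2) ^ ((1:ℝ)/(1 - 2*σ)))
    (lp lm : EuclideanSpace ℝ (Fin n) → ℝ)
    (hlp : ∀ ξ, lp ξ = -(ν/2) * ‖ξ‖ ^ (2*σ) + Real.sqrt (ν^2/4 * ‖ξ‖ ^ (4*σ) - ‖ξ‖^2))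
    (hlm : ∀ ξ, lm ξ = -(ν/2) * ‖ξ‖ ^ (2*σ) - Real.sqrt (ν^2/4 * ‖ξ‖ ^ (4*σ) - ‖ξ‖^2)) :
    ∃ C > 0, ∃ c > 0, ∀ ℓ : ℕ, ℓ ≤ 1 → ∀ t : ℝ, 0 ≤ t →
      ∀ ξ : EuclideanSpace ℝ (Fin n), 0 < ‖ξ‖ → ‖ξ‖ ≤ ρ →
        |deriv^[ℓ] (fun s => -(lm ξ) * Real.exp (lp ξ * s) / (lp ξ - lm ξ)) t|
            ≤ C * Real.exp (-c * (1 + t) * ‖ξ‖ ^ (2*(1 - σ))) * ‖ξ‖ ^ (2*(1 - σ)*(ℓ:ℝ)) ∧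
        |deriv^[ℓ] (fun s => Real.exp (lp ξ * s) / (lp ξ - lm ξ)) t|
            ≤ C * Real.exp (-c * (1 + t) * ‖ξ‖ ^ (2*(1 - σ))) * ‖ξ‖ ^ (2*(1 - σ)*(ℓ:ℝ) - 2*σ) := by
  obtain ⟨hσ0, hσh⟩ := hσ
  have hκ0 := myκ_pos ν σ hν hσh
  have hC0 : 0 < myC ν σ ρ := by
    unfold myC
    have : (0:ℝ) < ν/2 + 3/2 + 1/ν := by positivity
    exact mul_pos (div_pos this hκ0) (Real.exp_pos _)
  refine ⟨myC ν σ ρ, hC0, 1/ν, by positivity, ?_⟩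
  intro ℓ hℓ t ht ξ hr0 hrρ
  obtain ⟨H1, H2, H3, H4⟩ := aux_est ν σ ρ hν hσ0 hσh hρ ‖ξ‖ hr0 hrρ
    (lp ξ) (lm ξ) (hlp ξ) (hlm ξ) t ht
  interval_cases ℓ
  · simp only [Function.iterate_zero, id_eq]
    constructor
    · rw [show (2*(1 - σ)*((0:ℕ):ℝ)) = (0:ℝ) by norm_num, Real.rpow_zero, mul_one]
      exact H1
    · rw [show (2*(1 - σ)*((0:ℕ):ℝ) - 2*σ) = -(2*σ) by push_cast; ring]
      exact H2
  · simp only [Function.iterate_one]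
    constructor
    · rw [deriv_aux, show (2*(1 - σ)*((1:ℕ):ℝ)) = 2*(1 - σ) by norm_num]
      exact H3
    · rw [deriv_aux2, show (2*(1 - σ)*((1:ℕ):ℝ) - 2*σ) = 2*(1 - σ) - 2*σ by push_cast; ring]
      exact H4
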